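/- Let f be a density on ℝ^d with mode x₀ satisfying f(x) ≤ f(x₀) - c₀(‖x-x₀‖ ∧ h₀)^β for all x (sup-norm, with a ∧ b = min(a,b)). Then for any h > 0 and any k ∈ ℤ^d with ‖k - k₀‖ ≥ 3 where k₀ = ⌊x₀/h⌋, the probability mass p_k = ∫_{[kh,(k+1)h)} f(x)dx satisfies p_k ≤ f(x₀)h^d - c₀·((‖k-k₀‖-2) ∧ (h₀/h))^β · h^{d+β}. -/

import Mathlib

open MeasureTheory Real

/-- If the density f satisfies f(x) ≤ f(x₀) - c₀(‖x-x₀‖ ∧ h₀)^β everywhere, then for any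
h > 0 and any bin index k with ‖k-k₀‖ ≥ 3 (k₀ = ⌊x₀/h⌋), the mass of the bin
[kh,(k+1)h) is at most f(x₀)h^d - c₀((‖k-k₀‖-2) ∧ (h₀/h))^β h^{d+β}. -/
theorem mass_of_far_bin_upper_bound (d : ℕ) (hd : 1 ≤ d)
    (f : (Fin d → ℝ) → ℝ) (x₀ : Fin d → ℝ)
    (c₀ h₀ β : ℝ) (hc₀ : 0 < c₀) (hh₀ : 0 < h₀) (hβ : 0 < β)
    (hf_nonneg : ∀ x, 0 ≤ f x) (hf_int : ∫ x, f x = 1)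
    (hdecay : ∀ x, f x ≤ f x₀ - c₀ * (min ‖x - x₀‖ h₀) ^ β)
    (h : ℝ) (hh : 0 < h) (k : Fin d → ℤ)
    (hk : 3 ≤ ‖(fun i => ((k i - ⌊x₀ i / h⌋ : ℤ) : ℝ))‖) :
    (∫ x : Fin d → ℝ in
        Set.univ.pi (fun i => Set.Ico ((k i : ℝ) * h) (((k i : ℝ) + 1) * h)), f x)
      ≤ f x₀ * h ^ d
        - c₀ * (min (‖(fun i => ((k i - ⌊x₀ i / h⌋ : ℤ) : ℝ))‖ - 2) (h₀ / h)) ^ β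
            * h ^ ((d : ℝ) + β) := by
  have hne : Nonempty (Fin d) := ⟨⟨0, hd⟩⟩
  set v : Fin d → ℝ := (fun i => ((k i - ⌊x₀ i / h⌋ : ℤ) : ℝ)) with hv
  set K : ℝ := ‖v‖ with hKdef
  set m : ℝ := min (K - 2) (h₀ / h) with hmdef
  have hm_pos : 0 < m := lt_min (by linarith) (div_pos hh₀ hh)
  set S := Set.univ.pi (fun i => Set.Ico ((k i : ℝ) * h) (((k i : ℝ) + 1) * h)) with hS
  have hSmeas : MeasurableSet S :=
    MeasurableSet.univ_pi (fun i => measurableSet_Ico)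
  have hvol : volume S = ENNReal.ofReal (h ^ d) := by
    rw [hS, volume_pi_pi]
    have : ∀ i : Fin d, volume (Set.Ico ((k i : ℝ) * h) (((k i : ℝ) + 1) * h))
        = ENNReal.ofReal h := by
      intro i; rw [Real.volume_Ico]; ring_nf
    simp only [this, Finset.prod_const, Finset.card_univ, Fintype.card_fin]
    rw [← ENNReal.ofReal_pow hh.le]
  -- there is a coordinate achieving the sup norm
  obtain ⟨i₀, -, hi₀⟩ := Finset.exists_mem_eq_sup Finset.univ
    (Finset.univ_nonempty) (fun b => ‖v b‖₊)
  have hKi₀ : K = |v i₀| := by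
    rw [hKdef, Pi.norm_def, hi₀]; simp [Real.norm_eq_abs]
  -- pointwise bound on S
  have hpt : ∀ x ∈ S, f x ≤ f x₀ - c₀ * (h * m) ^ β := by
    intro x hx
    have hdist : h * m ≤ min ‖x - x₀‖ h₀ := by
      refine le_min ?_ ?_
      · -- ‖x - x₀‖ ≥ (K-2) h ≥ m h
        have hx₀ : (⌊x₀ i₀ / h⌋ : ℝ) * h ≤ x₀ i₀ ∧ x₀ i₀ < ((⌊x₀ i₀ / h⌋ : ℝ) + 1) * h := by
          constructor
          · have := Int.floor_le (x₀ i₀ / h)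
            calc (⌊x₀ i₀ / h⌋ : ℝ) * h ≤ (x₀ i₀ / h) * h := by nlinarith
            _ = x₀ i₀ := by field_simp
          · have := Int.lt_floor_add_one (x₀ i₀ / h)
            calc x₀ i₀ = (x₀ i₀ / h) * h := by field_simp
            _ < ((⌊x₀ i₀ / h⌋ : ℝ) + 1) * h := by nlinarith
        have hxi := hx i₀ trivial
        simp only [Set.mem_Ico] at hxi
        have hcoord : (|v i₀| - 1) * h ≤ |x i₀ - x₀ i₀| := by
          rcases le_or_gt (v i₀) 0 with hvle | hvgt
          · -- k i₀ ≤ k₀ i₀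
            rw [abs_of_nonpos hvle]
            have hvi : v i₀ = ((k i₀ : ℝ) - (⌊x₀ i₀ / h⌋ : ℝ)) := by
              simp [hv]
            rcases le_or_gt (-(v i₀) - 1) 0 with h1 | h1
            · nlinarith [abs_nonneg (x i₀ - x₀ i₀)]
            · have : x i₀ - x₀ i₀ ≤ -((-(v i₀) - 1) * h) := by nlinarith [hxi.2, hx₀.1]
              have habs : (-(v i₀) - 1) * h ≤ -(x i₀ - x₀ i₀) := by linarith
              calc (-(v i₀) - 1) * h ≤ -(x i₀ - x₀ i₀) := habs
              _ ≤ |x i₀ - x₀ i₀| := neg_le_abs _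
          · rw [abs_of_pos hvgt]
            have hvi : v i₀ = ((k i₀ : ℝ) - (⌊x₀ i₀ / h⌋ : ℝ)) := by simp [hv]
            have : (v i₀ - 1) * h ≤ x i₀ - x₀ i₀ := by nlinarith [hxi.1, hx₀.2]
            calc (v i₀ - 1) * h ≤ x i₀ - x₀ i₀ := this
            _ ≤ |x i₀ - x₀ i₀| := le_abs_self _
        have hle1 : (K - 2) * h ≤ (|v i₀| - 1) * h := by
          rw [hKi₀]; nlinarith
        have hle2 : |x i₀ - x₀ i₀| ≤ ‖x - x₀‖ := by
          have := norm_le_pi_norm (x - x₀) i₀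
          simpa [Real.norm_eq_abs] using this
        have hmK : m ≤ K - 2 := min_le_left _ _
        nlinarith
      · have : m ≤ h₀ / h := min_le_right _ _
        calc h * m ≤ h * (h₀ / h) := by nlinarith
        _ = h₀ := by field_simp
    have hmono : (h * m) ^ β ≤ (min ‖x - x₀‖ h₀) ^ β :=
      Real.rpow_le_rpow (by positivity) hdist hβ.le
    have := hdecay x
    nlinarith
  have hint : Integrable f := integrable_of_integral_eq_one hf_int
  have hintc : IntegrableOn (fun _ : Fin d → ℝ => f x₀ - c₀ * (h * m) ^ β) S volume := by
    exact integrableOn_const (by rw [hvol]; exact ENNReal.ofReal_ne_top)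
  have step1 : (∫ x in S, f x) ≤ ∫ _x in S, (f x₀ - c₀ * (h * m) ^ β) :=
    setIntegral_mono_on hint.integrableOn hintc hSmeas hpt
  have step2 : (∫ _x in S, (f x₀ - c₀ * (h * m) ^ β)) =
      (f x₀ - c₀ * (h * m) ^ β) * h ^ d := by
    rw [setIntegral_const, measureReal_def, hvol, ENNReal.toReal_ofReal (by positivity), smul_eq_mul,
      mul_comm]
  have hpow : (h * m) ^ β * h ^ d = m ^ β * h ^ ((d : ℝ) + β) := by
    rw [Real.mul_rpow hh.le hm_pos.le, Real.rpow_add hh, Real.rpow_natCast]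
    ring
  calc (∫ x in S, f x) ≤ (f x₀ - c₀ * (h * m) ^ β) * h ^ d := step1.trans step2.le
  _ = f x₀ * h ^ d - c₀ * ((h * m) ^ β * h ^ d) := by ring
  _ = f x₀ * h ^ d - c₀ * m ^ β * h ^ ((d : ℝ) + β) := by rw [hpow]; ring
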